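/- arXiv:1901.03983 — 2 statements merged into one kernel-verified Lean document; each statement's English description precedes it below -/
import Mathlib

section
/- For every odd integer m ≥ 3, the exponent of 2 in the binomial coefficient C(2m−3, m−3) equals α(m) − 2, where α(m) is the number of ones in the binary expansion of m. -/
lemma sum_digits_two_step (n : ℕ) (hn : 0 < n) :
    (Nat.digits 2 n).sum = n % 2 + (Nat.digits 2 (n / 2)).sum := by
  rw [Nat.digits_def' (by norm_num) hn, List.sum_cons]

lemma sum_digits_two_pos (n : ℕ) (hn : 0 < n) : 0 < (Nat.digits 2 n).sum := by
  induction n using Nat.strong_induction_on with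
  | _ n ih =>
    rw [sum_digits_two_step n hn]
    rcases Nat.even_or_odd n with he | ho
    · have hm2 : n % 2 = 0 := Nat.even_iff.mp he
      have h2 : 0 < n / 2 := by omega
      have := ih (n / 2) (by omega) h2
      omega
    · have : n % 2 = 1 := Nat.odd_iff.mp ho
      omega

/-- For odd `m ≥ 3`, the exponent of 2 in `C(2m-3, m-3)` equals `α(m) - 2`,
where `α(m) = (Nat.digits 2 m).sum` is the number of ones in the binary
expansion of `m`. -/
theorem stmt_5 (m : ℕ) (hm : 3 ≤ m) (hmo : Odd m) :
    padicValNat 2 ((2 * m - 3).choose (m - 3)) = (Nat.digits 2 m).sum - 2 := by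
  obtain ⟨t, rfl⟩ := hmo
  have ht : 1 ≤ t := by omega
  have key := @sub_one_mul_padicValNat_choose_eq_sub_sum_digits' 2 (2 * t + 1 - 3) (2 * t + 1) ⟨Nat.prime_two⟩
  have h1 : 2 * t + 1 + (2 * t + 1 - 3) = 2 * (2 * t + 1) - 3 := by omega
  rw [h1] at key
  -- digit sums
  have hsm : (Nat.digits 2 (2 * t + 1)).sum = 1 + (Nat.digits 2 t).sum := by
    rw [sum_digits_two_step _ (by omega)]
    rw [show (2 * t + 1) % 2 = 1 by omega, show (2 * t + 1) / 2 = t by omega]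
  have hsk : (Nat.digits 2 (2 * t + 1 - 3)).sum = (Nat.digits 2 (t - 1)).sum := by
    rcases Nat.eq_or_lt_of_le ht with h | h
    · simp [← h]
    · rw [show 2 * t + 1 - 3 = 2 * (t - 1) by omega,
        sum_digits_two_step _ (by omega)]
      have : 2 * (t - 1) % 2 = 0 := by omega
      rw [this, show 2 * (t - 1) / 2 = t - 1 by omega, zero_add]
  have hsn : (Nat.digits 2 (2 * (2 * t + 1) - 3)).sum = 2 + (Nat.digits 2 (t - 1)).sum := by
    rw [sum_digits_two_step _ (by omega)]
    rw [show (2 * (2 * t + 1) - 3) % 2 = 1 by omega,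
      show (2 * (2 * t + 1) - 3) / 2 = 2 * (t - 1) + 1 by omega,
      sum_digits_two_step _ (by omega),
      show (2 * (t - 1) + 1) % 2 = 1 by omega,
      show (2 * (t - 1) + 1) / 2 = t - 1 by omega]
    ring
  rw [hsk, hsm, hsn] at key
  have hpos := sum_digits_two_pos t ht
  rw [hsm]
  omega
end

section
/- Let r ≥ 2 and 1 ≤ t ≤ r−1 be integers, and let S = Σ_{k} (−1)^k · C(2r−2t−1, k) · C(2t+2, 2r−2t−2k), where k ranges over all natural numbers (terms with 2r−2t−2k < 0 or 2r−2t−2k > 2t+2 or k > 2r−2t−1 vanish). If α(r) ≥ t+1, then 2^{α(r)−t−1} divides S. -/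
private lemma alpha_two_mul (m : ℕ) (hm : m ≠ 0) :
    (Nat.digits 2 (2 * m)).sum = (Nat.digits 2 m).sum := by
  rw [Nat.digits_def' (by norm_num : (1:ℕ) < 2) (by omega)]
  simp [Nat.mul_div_cancel_left, Nat.mul_mod_right]

private lemma alpha_two_mul_add_one (m : ℕ) :
    (Nat.digits 2 (2 * m + 1)).sum = (Nat.digits 2 m).sum + 1 := by
  rw [Nat.digits_def' (by norm_num : (1:ℕ) < 2) (by omega)]
  have h1 : (2 * m + 1) % 2 = 1 := by omega
  have h2 : (2 * m + 1) / 2 = m := by omega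
  rw [h1, h2, List.sum_cons]
  omega

private lemma alpha_succ_le (x : ℕ) :
    (Nat.digits 2 (x + 1)).sum ≤ (Nat.digits 2 x).sum + 1 := by
  induction x using Nat.strong_induction_on with
  | _ x ih =>
    rcases Nat.even_or_odd x with ⟨m, hm⟩ | ⟨m, hm⟩
    · rcases Nat.eq_zero_or_pos m with h0 | h0
      · subst hm; subst h0; simp
      · have hx : x = 2 * m := by omega
        subst hx
        rw [alpha_two_mul m (by omega), alpha_two_mul_add_one m]
    · have hx : x + 1 = 2 * (m + 1) := by omega
      rw [hx, alpha_two_mul (m + 1) (by omega)]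
      have h1 : x = 2 * m + 1 := by omega
      rw [h1, alpha_two_mul_add_one m]
      have := ih m (by omega)
      omega

private lemma alpha_add_le (a b : ℕ) :
    (Nat.digits 2 (a + b)).sum ≤ (Nat.digits 2 a).sum + b := by
  induction b with
  | zero => simp
  | succ b ihb =>
    have h := alpha_succ_le (a + b)
    have h2 : a + (b + 1) = (a + b) + 1 := by omega
    rw [h2]
    omega

/-- The core estimate in the proof of Proposition 4.5 (case `m = 2r`, `i = 2r-2t`):
if `α(r) ≥ t+1` then `2^(α(r)-t-1)` divides
`S = ∑_k (-1)^k C(2r-2t-1, k) C(2t+2, 2r-2t-2k)`.  (Terms with `k > r - t`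
vanish since then `2r-2t-2k < 0`, and terms with `k > 2r-2t-1` vanish as well,
so the sum may be taken over `0 ≤ k ≤ r - t`.)
Here `α(r) = (Nat.digits 2 r).sum`. -/
theorem stmt_6 (r t : ℕ) (hr : 2 ≤ r) (ht1 : 1 ≤ t) (ht2 : t ≤ r - 1)
    (h : t + 1 ≤ (Nat.digits 2 r).sum) :
    (2 : ℤ) ^ ((Nat.digits 2 r).sum - t - 1) ∣
      ∑ k ∈ Finset.range (r - t + 1),
        (-1) ^ k * ((2 * r - 2 * t - 1).choose k : ℤ) *
          ((2 * t + 2).choose (2 * r - 2 * t - 2 * k) : ℤ) := by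
  set n := r - t with hn
  have hn1 : 1 ≤ n := by omega
  have hrnt : r = n + t := by omega
  apply Finset.dvd_sum
  intro k hk
  have hkn : k ≤ n := by
    have := Finset.mem_range.mp hk; omega
  by_cases hc : 2 * t + 2 < 2 * r - 2 * t - 2 * k
  · rw [Nat.choose_eq_zero_of_lt hc]
    simp
  · -- nonzero term: n - k ≤ t + 1
    push_neg at hc
    have hjt : n - k ≤ t + 1 := by omega
    -- divisibility of the first binomial coefficient
    have hidx : 2 * r - 2 * t - 1 = 2 * n - 1 := by omega
    rw [hidx]
    have hC : (2 : ℤ) ^ ((Nat.digits 2 r).sum - t - 1) ∣ ((2 * n - 1).choose k : ℤ) := by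
      have hCne : (2 * n - 1).choose k ≠ 0 :=
        (Nat.choose_pos (by omega)).ne'
      have hdvd : 2 ^ ((Nat.digits 2 r).sum - t - 1) ∣ (2 * n - 1).choose k := by
        rw [Nat.Prime.pow_dvd_iff_le_factorization Nat.prime_two hCne,
          Nat.factorization_def _ Nat.prime_two]
        -- Kummer's theorem
        have hkum := sub_one_mul_padicValNat_choose_eq_sub_sum_digits
          (p := 2) (k := k) (n := 2 * n - 1) (by omega)
        -- digit sums
        have hc1 : (Nat.digits 2 (2 * n - 1)).sum = (Nat.digits 2 (n - 1)).sum + 1 := by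
          rw [show 2 * n - 1 = 2 * (n - 1) + 1 by omega, alpha_two_mul_add_one]
        rcases Nat.eq_or_lt_of_le hkn with hkeq | hklt
        · -- k = n
          subst hkeq
          have hb : 2 * n - 1 - n = n - 1 := by omega
          rw [hb] at hkum
          have he : (Nat.digits 2 r).sum ≤ (Nat.digits 2 n).sum + t := by
            rw [hrnt]
            exact alpha_add_le n t
          omega
        · -- k < n, set j = n - k ≥ 1
          have he : (Nat.digits 2 r).sum ≤
              (Nat.digits 2 (2 * n - 1 - k)).sum + (t + 1 - (n - k)) := by
            have h' := alpha_add_le (2 * n - 1 - k) (t + 1 - (n - k))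
            rw [show 2 * n - 1 - k + (t + 1 - (n - k)) = r by omega] at h'
            exact h'
          have hd : (Nat.digits 2 (n - 1)).sum ≤
              (Nat.digits 2 k).sum + (n - k - 1) := by
            have h' := alpha_add_le k (n - k - 1)
            rw [show k + (n - k - 1) = n - 1 by omega] at h'
            exact h'
          omega
      exact_mod_cast Int.natCast_dvd_natCast.mpr hdvd
    exact Dvd.dvd.mul_right (Dvd.dvd.mul_left hC _) _
end
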